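/- Let n ≥ 1 and define S : ℝ × ℝⁿ × ℝⁿ → ℝ × ℝⁿ × ℝⁿ by S(x_0, x, p) = (x_0 − p_1²/4, x_1 + p_1/2, x_2, …, x_n, p_1, …, p_n). For 1 ≤ i ≤ n let Λ_i := {(h_i(x)², x, −∇(h_i²)(x)) : x ∈ ℝⁿ} and let L_i := {(x, p) ∈ ℝⁿ × ℝⁿ : x_1 = h_{i,1}(x)², and p_j = −p_1 · ∂(h_{i,1}²)/∂x_j(x) for j = 2,…,n}, with the conventions Λ_0 := {(0, x, 0) : x ∈ ℝⁿ} and L_0 := {(x, 0) : x ∈ ℝⁿ}. Then for every 0 ≤ i ≤ n, the image S(Λ_i) equals {0} × L_i, and S restricts to a bijection from Λ_i onto {0} × L_i. -/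

import Mathlib

open scoped ContDiff

noncomputable section

/-- The polynomial `h_i` in the variables `x_1, …, x_i` (0-indexed: it depends on
coordinates `0, …, i-1`): `h_0 = 0`, `h_{i+1}(x) = x 0 - (h_i (x ∘ (·+1)))^2`. -/
def hpoly : ℕ → (ℕ → ℝ) → ℝ
  | 0, _ => 0
  | i + 1, x => x 0 - (hpoly i fun k => x (k + 1)) ^ 2

/-- Extension of a vector of `ℝⁿ` by zeros to an infinite sequence. -/
def extv {n : ℕ} (x : Fin n → ℝ) : ℕ → ℝ := fun k => if h : k < n then x ⟨k, h⟩ else 0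

/-- `h_{i,j}` as a function on `ℝⁿ` (0-indexed: it depends on coordinates `j, …, i-1`;
in the paper's notation `h_{i,j}(x) = h_{i-j}(x_{j+1}, …, x_i)`). -/
def hh (n i j : ℕ) (x : Fin n → ℝ) : ℝ := hpoly (i - j) fun k => extv x (j + k)

/-- The gradient of a function on `ℝⁿ`, via the Fréchet derivative. -/
def grad {n : ℕ} (f : (Fin n → ℝ) → ℝ) (x : Fin n → ℝ) : Fin n → ℝ :=
  fun k => fderiv ℝ f x (Pi.single k 1)

/-- The `m`-th standard basis vector of `ℝⁿ` (zero if `m ≥ n`). -/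
def evec (n m : ℕ) : Fin n → ℝ := fun k => if (k : ℕ) = m then 1 else 0

-- auxiliary
def g (n m j : ℕ) (x : Fin n → ℝ) : ℝ := hpoly m fun k => extv x (j + k)

lemma hh_eq_g (n i j : ℕ) : hh n i j = g n (i - j) j := rfl

lemma g_succ (n m j : ℕ) (x : Fin n → ℝ) :
    g n (m + 1) j x = extv x j - (g n m (j + 1) x) ^ 2 := by
  show hpoly (m + 1) (fun k => extv x (j + k)) = _
  rw [hpoly]
  have h2 : (fun k => extv x (j + (k + 1))) = fun k => extv x ((j + 1) + k) := by
    funext k; congr 1; omega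
  rw [h2]
  rfl

lemma extv_lt {n : ℕ} (x : Fin n → ℝ) (k : ℕ) (h : k < n) : extv x k = x ⟨k, h⟩ := dif_pos h

lemma extv_ge {n : ℕ} (x : Fin n → ℝ) (k : ℕ) (h : ¬ k < n) : extv x k = 0 := dif_neg h

lemma extv_diff (n j : ℕ) : Differentiable ℝ (fun y : Fin n → ℝ => extv y j) := by
  by_cases h : j < n
  · have : (fun y : Fin n → ℝ => extv y j)
        = ((ContinuousLinearMap.proj ⟨j, h⟩ : (Fin n → ℝ) →L[ℝ] ℝ) : (Fin n → ℝ) → ℝ) := by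
      funext y; exact dif_pos h
    rw [this]
    exact (ContinuousLinearMap.proj (R := ℝ) (φ := fun _ : Fin n => ℝ) ⟨j, h⟩).differentiable
  · have : (fun y : Fin n → ℝ => extv y j) = fun _ => (0:ℝ) := by
      funext y; exact dif_neg h
    rw [this]; exact differentiable_const 0

lemma fderiv_extv (n j : ℕ) (x v : Fin n → ℝ) :
    fderiv ℝ (fun y : Fin n → ℝ => extv y j) x v = extv v j := by
  by_cases h : j < n
  · have he : (fun y : Fin n → ℝ => extv y j)
        = ((ContinuousLinearMap.proj ⟨j, h⟩ : (Fin n → ℝ) →L[ℝ] ℝ) : (Fin n → ℝ) → ℝ) := by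
      funext y; exact dif_pos h
    rw [he, ContinuousLinearMap.fderiv]
    show v ⟨j, h⟩ = extv v j
    exact (extv_lt v j h).symm
  · have he : (fun y : Fin n → ℝ => extv y j) = fun _ => (0:ℝ) := by
      funext y; exact dif_neg h
    rw [he, fderiv_fun_const]
    simp [extv, h]

lemma g_zero_fun (n j : ℕ) : g n 0 j = fun _ => (0:ℝ) := rfl

lemma g_succ_fun (n m j : ℕ) :
    g n (m + 1) j = fun y => extv y j - g n m (j + 1) y * g n m (j + 1) y := by
  funext y; rw [g_succ]; ring

lemma g_diff (n m j : ℕ) : Differentiable ℝ (g n m j) := by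
  induction m generalizing j with
  | zero => rw [g_zero_fun]; exact differentiable_const 0
  | succ m ih =>
      rw [g_succ_fun]
      exact (extv_diff n j).sub ((ih (j+1)).mul (ih (j+1)))

lemma g_fderiv (n m j : ℕ) (x v : Fin n → ℝ) :
    fderiv ℝ (g n (m + 1) j) x v
      = extv v j - 2 * g n m (j + 1) x * fderiv ℝ (g n m (j + 1)) x v := by
  rw [g_succ_fun,
    fderiv_fun_sub ((extv_diff n j).differentiableAt)
      (show DifferentiableAt ℝ (fun y => g n m (j + 1) y * g n m (j + 1) y) x from
        (g_diff n m (j+1)).differentiableAt.mul (g_diff n m (j+1)).differentiableAt),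
    fderiv_fun_mul (g_diff n m (j+1)).differentiableAt (g_diff n m (j+1)).differentiableAt]
  simp only [ContinuousLinearMap.sub_apply, ContinuousLinearMap.add_apply,
    ContinuousLinearMap.smul_apply, smul_eq_mul, fderiv_extv]
  ring

lemma extv_update (n : ℕ) (hn : 1 ≤ n) (x : Fin n → ℝ) (c : ℝ) (r : ℕ) (hr : 1 ≤ r) :
    extv (Function.update x ⟨0, hn⟩ c) r = extv x r := by
  unfold extv
  split
  · rw [Function.update_of_ne (Fin.ne_of_val_ne (by simp; omega))]
  · rfl

lemma g_update (n m j : ℕ) (hj : 1 ≤ j) (hn : 1 ≤ n) (x : Fin n → ℝ) (c : ℝ) :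
    g n m j (Function.update x ⟨0, hn⟩ c) = g n m j x := by
  unfold g
  congr 1
  funext k
  exact extv_update n hn x c (j + k) (by omega)

lemma g_fderiv_update (n m j : ℕ) (hj : 1 ≤ j) (hn : 1 ≤ n) (x : Fin n → ℝ) (c : ℝ)
    (v : Fin n → ℝ) :
    fderiv ℝ (g n m j) (Function.update x ⟨0, hn⟩ c) v = fderiv ℝ (g n m j) x v := by
  induction m generalizing j with
  | zero => rw [g_zero_fun]; simp
  | succ m ih =>
      rw [g_fderiv, g_fderiv, g_update n m (j+1) (by omega) hn, ih (j+1) (by omega)]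

lemma g_fderiv_e0 (n m j : ℕ) (hj : 1 ≤ j) (hn : 1 ≤ n) (x : Fin n → ℝ) :
    fderiv ℝ (g n m j) x (Pi.single ⟨0, hn⟩ 1) = 0 := by
  induction m generalizing j with
  | zero => rw [g_zero_fun, fderiv_fun_const]; simp
  | succ m ih =>
      rw [g_fderiv, ih (j+1) (by omega)]
      have : extv (Pi.single (⟨0, hn⟩ : Fin n) (1:ℝ)) j = 0 := by
        by_cases h : j < n
        · rw [extv_lt _ _ h, Pi.single_apply, if_neg (by simp [Fin.ext_iff]; omega)]
        · exact extv_ge _ _ h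
      rw [this]; ring

lemma grad_sq (n m j : ℕ) (x : Fin n → ℝ) (k : Fin n) :
    grad (fun y => (g n m j y) ^ 2) x k
      = 2 * g n m j x * fderiv ℝ (g n m j) x (Pi.single k 1) := by
  unfold grad
  have h1 : (fun y : Fin n → ℝ => (g n m j y) ^ 2) = fun y => g n m j y * g n m j y := by
    funext y; ring
  rw [h1, fderiv_fun_mul (g_diff n m j).differentiableAt (g_diff n m j).differentiableAt]
  simp only [ContinuousLinearMap.add_apply, ContinuousLinearMap.smul_apply, smul_eq_mul]
  ring

lemma P_e0 (n m : ℕ) (hn : 1 ≤ n) (x : Fin n → ℝ) :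
    grad (fun y => (g n (m + 1) 0 y) ^ 2) x ⟨0, hn⟩ = 2 * g n (m + 1) 0 x := by
  rw [grad_sq, g_fderiv, g_fderiv_e0 n m (0+1) (by omega) hn]
  have : extv (Pi.single (⟨0, hn⟩ : Fin n) (1:ℝ)) 0 = 1 := by
    rw [extv_lt _ _ hn]; simp
  rw [this]; ring

lemma P_k (n m : ℕ) (hn : 1 ≤ n) (x : Fin n → ℝ) (k : Fin n) (hk : 1 ≤ (k : ℕ)) :
    grad (fun y => (g n (m + 1) 0 y) ^ 2) x k
      = -4 * g n (m + 1) 0 x * g n m (0+1) x * fderiv ℝ (g n m (0+1)) x (Pi.single k 1) := by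
  rw [grad_sq, g_fderiv]
  have : extv (Pi.single k (1:ℝ)) 0 = 0 := by
    rw [extv_lt _ _ hn, Pi.single_apply, if_neg (by simp [Fin.ext_iff]; omega)]
  rw [this]; ring

/-- Let `n ≥ 1` and `S(x_0, x, p) = (x_0 - p_1²/4, x_1 + p_1/2, x_2, …, x_n, p)`.
For `1 ≤ i ≤ n` let `Λ_i = {(h_i(x)², x, -∇(h_i²)(x))}` (for `i = 0` this formula gives the
convention `Λ_0 = {(0, x, 0)}`), and let `L_i = {(x, p) : x_1 = h_{i,1}(x)²,
p_j = -p_1 ∂(h_{i,1}²)/∂x_j (j = 2, …, n)}`, with `L_0 = {(x, 0)}`.  Then for every `0 ≤ i ≤ n`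
the image `S(Λ_i)` equals `{0} × L_i`, and `S` restricts to a bijection from `Λ_i` onto it.
(0-indexed: the paper's `x_1, p_1` are coordinates `0`.) -/
theorem stmt_2 (n : ℕ) (hn : 1 ≤ n)
    (S : ℝ × (Fin n → ℝ) × (Fin n → ℝ) → ℝ × (Fin n → ℝ) × (Fin n → ℝ))
    (hS : ∀ z, S z =
      (z.1 - (z.2.2 ⟨0, hn⟩) ^ 2 / 4,
       Function.update z.2.1 ⟨0, hn⟩ (z.2.1 ⟨0, hn⟩ + z.2.2 ⟨0, hn⟩ / 2),
       z.2.2)) :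
    ∀ i : ℕ, i ≤ n →
      S '' {z | ∃ x : Fin n → ℝ,
              z = ((hh n i 0 x) ^ 2, x, fun k => - grad (fun y => (hh n i 0 y) ^ 2) x k)}
        = {z | z.1 = 0 ∧
            (if i = 0 then z.2.2 = 0
             else z.2.1 ⟨0, hn⟩ = (hh n i 1 z.2.1) ^ 2 ∧
               ∀ k : Fin n, 1 ≤ (k : ℕ) →
                 z.2.2 k = - z.2.2 ⟨0, hn⟩ * grad (fun y => (hh n i 1 y) ^ 2) z.2.1 k)} ∧
      Set.InjOn S {z | ∃ x : Fin n → ℝ,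
              z = ((hh n i 0 x) ^ 2, x, fun k => - grad (fun y => (hh n i 0 y) ^ 2) x k)} := by
  have hSinj : Function.Injective S := by
    rintro ⟨a1, a2, a3⟩ ⟨b1, b2, b3⟩ hab
    simp only [hS, Prod.mk.injEq] at hab
    obtain ⟨h1, h2, h3⟩ := hab
    subst h3
    have h2' : a2 = b2 := by
      funext k
      by_cases hk : k = ⟨0, hn⟩
      · subst hk
        have := congrFun h2 ⟨0, hn⟩
        rw [Function.update_self, Function.update_self] at this
        linarith
      · have := congrFun h2 k
        rwa [Function.update_of_ne hk, Function.update_of_ne hk] at this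
    subst h2'
    have : a1 = b1 := by linarith
    rw [this]
  intro i _hi
  refine ⟨?_, hSinj.injOn⟩
  rcases i with _ | m
  · -- i = 0
    have h0 : ∀ x : Fin n → ℝ, hh n 0 0 x = 0 := fun _ => rfl
    have hgrad0 : ∀ (x : Fin n → ℝ) (k : Fin n),
        grad (fun y => (hh n 0 0 y) ^ 2) x k = 0 := by
      intro x k
      unfold grad
      have he : (fun y : Fin n → ℝ => (hh n 0 0 y) ^ 2) = fun _ => (0:ℝ) := by
        funext y; rw [h0]; ring
      rw [he]; simp
    ext z
    simp only [Set.mem_image, Set.mem_setOf_eq]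
    simp only [if_true]
    constructor
    · rintro ⟨w, ⟨x, rfl⟩, rfl⟩
      rw [hS]
      constructor
      · simp only [hgrad0]
        rw [h0]
        norm_num
      · funext k
        simp only [hgrad0, neg_zero, Pi.zero_apply]
    · rintro ⟨hz1, hz2⟩
      obtain ⟨z1, z2, z3⟩ := z
      simp only at hz1 hz2
      refine ⟨(0, z2, 0), ⟨z2, ?_⟩, ?_⟩
      · have hl : (fun k : Fin n => - grad (fun y => (hh n 0 0 y) ^ 2) z2 k)
            = (0 : Fin n → ℝ) := by
          funext k; simp [hgrad0]
        rw [hl, h0 z2]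
        norm_num
      · rw [hS]
        subst hz1; subst hz2
        simp only [Prod.mk.injEq]
        refine ⟨by simp, by simp, by trivial⟩
  · -- i = m + 1
    have key : ∀ x : Fin n → ℝ,
        S ((g n (m+1) 0 x) ^ 2, x, fun k => - grad (fun y => (g n (m+1) 0 y) ^ 2) x k)
        = (0, Function.update x ⟨0, hn⟩ ((g n m 1 x) ^ 2),
            fun k => - grad (fun y => (g n (m+1) 0 y) ^ 2) x k) := by
      intro x
      rw [hS]
      simp only [Prod.mk.injEq]
      refine ⟨?_, ?_, by trivial⟩
      · rw [P_e0 n m hn x]; ring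
      · rw [P_e0 n m hn x]
        rw [g_succ n m 0 x]
        simp only [Nat.zero_add]
        rw [extv_lt x 0 hn]
        ring
    simp only [hh_eq_g, Nat.sub_zero, Nat.add_sub_cancel]
    ext z
    simp only [Set.mem_image, Set.mem_setOf_eq]
    rw [if_neg (Nat.succ_ne_zero m)]
    constructor
    · rintro ⟨w, ⟨x, rfl⟩, rfl⟩
      rw [key x]
      dsimp only
      refine ⟨rfl, ?_, ?_⟩
      · rw [Function.update_self, g_update n m 1 le_rfl hn]
      · intro k hk
        show - grad (fun y => (g n (m+1) 0 y) ^ 2) x k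
          = - (- grad (fun y => (g n (m+1) 0 y) ^ 2) x ⟨0, hn⟩) * _
        rw [P_e0 n m hn x, P_k n m hn x k hk, grad_sq,
          g_fderiv_update n m 1 le_rfl hn, g_update n m 1 le_rfl hn]
        simp only [Nat.zero_add]
        ring
    · rintro ⟨hz1, hz2, hz3⟩
      obtain ⟨z1, z2, z3⟩ := z
      simp only at hz1 hz2 hz3
      set x := Function.update z2 ⟨0, hn⟩ (z2 ⟨0, hn⟩ - z3 ⟨0, hn⟩ / 2) with hx
      have hx0 : x ⟨0, hn⟩ = z2 ⟨0, hn⟩ - z3 ⟨0, hn⟩ / 2 := by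
        rw [hx, Function.update_self]
      have hg1 : g n m 1 x = g n m 1 z2 := by
        rw [hx]; exact g_update n m 1 le_rfl hn z2 _
      have hG : g n (m+1) 0 x = - z3 ⟨0, hn⟩ / 2 := by
        rw [g_succ n m 0 x]
        simp only [Nat.zero_add]
        rw [extv_lt x 0 hn, hx0, hg1, ← hz2]
        ring
      refine ⟨((g n (m+1) 0 x) ^ 2, x,
        fun k => - grad (fun y => (g n (m+1) 0 y) ^ 2) x k), ⟨x, rfl⟩, ?_⟩
      rw [key x]
      simp only [Prod.mk.injEq]
      refine ⟨hz1.symm, ?_, ?_⟩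
      · rw [hg1, ← hz2, hx, Function.update_idem, Function.update_eq_self]
      · funext k
        by_cases hk : (k : ℕ) = 0
        · have hk' : k = ⟨0, hn⟩ := Fin.ext hk
          subst hk'
          show - grad (fun y => (g n (m+1) 0 y) ^ 2) x ⟨0, hn⟩ = z3 ⟨0, hn⟩
          rw [P_e0 n m hn x, hG]; ring
        · have hk1 : 1 ≤ (k : ℕ) := by omega
          show - grad (fun y => (g n (m+1) 0 y) ^ 2) x k = z3 k
          rw [P_k n m hn x k hk1, hz3 k hk1, grad_sq]
          simp only [Nat.zero_add]
          rw [hG, hg1]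
          rw [hx, g_fderiv_update n m 1 le_rfl hn]
          ring
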